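/- Let 1 ≤ L ≤ N and for 1 ≤ j ≤ L define the Jordan–Wigner operator a_j ∈ M_(2^N)(ℂ) as the Kronecker product a_j = Z^{⊗(j−1)} ⊗ σ⁻ ⊗ I₂^{⊗(N−j)}, where Z = diag(1,−1) and σ⁻ is the 2×2 matrix with (σ⁻)_{0,1} = 1 and all other entries 0. Then the smallest linear subspace of M_(2^N)(ℂ) that contains {a_j : 1 ≤ j ≤ L} and is closed under matrix multiplication and conjugate transpose equals { X ⊗ I_(2^{N−L}) : X ∈ M_(2^L)(ℂ) }. In particular, every operator of the form U ⊗ I_(2^{N−L}) is generated by the field operators of the first L modes, i.e., it is local on the first L modes. -/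

import Mathlib

open Matrix
open scoped ComplexOrder

noncomputable section

/-- Bit strings of length `N`. -/
abbrev BitStr (N : ℕ) := Fin N → Fin 2

/-- The Jordan–Wigner representative `a_j = Z^{⊗(j−1)} ⊗ σ⁻ ⊗ I₂^{⊗(N−j)}` of the `j`-th
fermionic annihilation operator, as a matrix on `(ℂ²)^{⊗N}` indexed by bit strings:
its `(s,t)` entry is `Π_{i<j} (−1)^{s_i}` when `s j = 0`, `t j = 1` and `s i = t i`
for all `i ≠ j`, and `0` otherwise. -/
def jwOp (N : ℕ) (j : Fin N) : Matrix (BitStr N) (BitStr N) ℂ :=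
  Matrix.of fun s t =>
    if (∀ i, i ≠ j → s i = t i) ∧ s j = 0 ∧ t j = 1 then
      ∏ i ∈ Finset.univ.filter (fun i : Fin N => (i : ℕ) < (j : ℕ)), (-1 : ℂ) ^ (s i : ℕ)
    else 0

namespace JWP
variable {L N : ℕ}

/-- 2×2 matrix unit. -/
def E (a b : Fin 2) : Matrix (Fin 2) (Fin 2) ℂ :=
  Matrix.of fun x y => if x = a ∧ y = b then 1 else 0

/-- single-site operator -/
def site {N : ℕ} (j : Fin N) (A : Matrix (Fin 2) (Fin 2) ℂ) :
    Matrix (BitStr N) (BitStr N) ℂ :=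
  Matrix.of fun s t => if ∀ i, i ≠ j → s i = t i then A (s j) (t j) else 0

/-- embedding X ↦ X ⊗ I -/
def f (hLN : L ≤ N) (X : Matrix (BitStr L) (BitStr L) ℂ) :
    Matrix (BitStr N) (BitStr N) ℂ :=
  Matrix.of fun s t =>
    if ∀ i : Fin N, L ≤ (i : ℕ) → s i = t i then
      X (fun k => s (Fin.castLE hLN k)) (fun k => t (Fin.castLE hLN k))
    else 0

lemma f_apply (hLN : L ≤ N) (X : Matrix (BitStr L) (BitStr L) ℂ) (s t : BitStr N) :
    f hLN X s t = if ∀ i : Fin N, L ≤ (i : ℕ) → s i = t i then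
      X (fun k => s (Fin.castLE hLN k)) (fun k => t (Fin.castLE hLN k)) else 0 := rfl

lemma f_add (hLN : L ≤ N) (X Y : Matrix (BitStr L) (BitStr L) ℂ) :
    f hLN (X + Y) = f hLN X + f hLN Y := by
  ext s t
  simp only [f_apply, Matrix.add_apply]
  split <;> simp

lemma f_smul (hLN : L ≤ N) (c : ℂ) (X : Matrix (BitStr L) (BitStr L) ℂ) :
    f hLN (c • X) = c • f hLN X := by
  ext s t
  simp only [f_apply, Matrix.smul_apply, smul_eq_mul]
  split <;> simp

lemma f_star (hLN : L ≤ N) (X : Matrix (BitStr L) (BitStr L) ℂ) :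
    star (f hLN X) = f hLN (star X) := by
  ext s t
  simp only [Matrix.star_apply, f_apply]
  rw [apply_ite (star : ℂ → ℂ), star_zero,
    ]
  by_cases h : ∀ i : Fin N, L ≤ (i:ℕ) → s i = t i
  · rw [if_pos h, if_pos (fun i hi => (h i hi).symm)]
  · rw [if_neg h, if_neg (fun h' => h (fun i hi => (h' i hi).symm))]

/-- glue a length-`L` head onto the tail of `s`. -/
def glue (hLN : L ≤ N) (s : BitStr N) (w : BitStr L) : BitStr N :=
  fun i => if h : (i : ℕ) < L then w ⟨i, h⟩ else s i

lemma head_glue (hLN : L ≤ N) (s : BitStr N) (w : BitStr L) :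
    (fun k => glue hLN s w (Fin.castLE hLN k)) = w := by
  funext k
  simp only [glue, Fin.coe_castLE, k.isLt, dif_pos]

lemma tail_glue (hLN : L ≤ N) (s : BitStr N) (w : BitStr L) :
    ∀ i : Fin N, L ≤ (i : ℕ) → s i = glue hLN s w i := by
  intro i hi
  simp only [glue, dif_neg (Nat.not_lt.mpr hi)]

lemma glue_head (hLN : L ≤ N) (s x : BitStr N) (hx : ∀ i : Fin N, L ≤ (i : ℕ) → s i = x i) :
    glue hLN s (fun k => x (Fin.castLE hLN k)) = x := by
  funext i
  by_cases h : (i : ℕ) < L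
  · simp only [glue, dif_pos h]
    congr 1
  · simp only [glue, dif_neg h]
    exact hx i (Nat.not_lt.mp h)

lemma f_mul (hLN : L ≤ N) (X Y : Matrix (BitStr L) (BitStr L) ℂ) :
    f hLN X * f hLN Y = f hLN (X * Y) := by
  ext s t
  rw [Matrix.mul_apply, f_apply]
  by_cases hst : ∀ i : Fin N, L ≤ (i : ℕ) → s i = t i
  · rw [if_pos hst, Matrix.mul_apply]
    have hzero : ∀ x ∈ (Finset.univ : Finset (BitStr N)),
        x ∉ Finset.univ.filter (fun x : BitStr N => ∀ i : Fin N, L ≤ (i : ℕ) → s i = x i) →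
        f hLN X s x * f hLN Y x t = 0 := by
      intro x _ hx
      simp only [Finset.mem_filter, Finset.mem_univ, true_and] at hx
      rw [f_apply, if_neg hx, zero_mul]
    rw [← Finset.sum_subset
        (Finset.subset_univ
          (Finset.univ.filter (fun x : BitStr N => ∀ i : Fin N, L ≤ (i : ℕ) → s i = x i)))
        hzero]
    · refine Finset.sum_nbij' (fun x => fun k => x (Fin.castLE hLN k)) (fun w => glue hLN s w)
        (fun a _ => Finset.mem_univ _) (fun w _ => ?_) (fun x hx => ?_)
        (fun w _ => head_glue hLN s w) (fun x hx => ?_)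
      · simp only [Finset.mem_filter, Finset.mem_univ, true_and]
        exact tail_glue hLN s w
      · simp only [Finset.mem_filter, Finset.mem_univ, true_and] at hx
        exact glue_head hLN s x hx
      · simp only [Finset.mem_filter, Finset.mem_univ, true_and] at hx
        rw [f_apply, f_apply, if_pos hx, if_pos (fun i hi => ((hx i hi).symm).trans (hst i hi))]
  · rw [if_neg hst]
    refine Finset.sum_eq_zero (fun x _ => ?_)
    rcases eq_or_ne (f hLN X s x) 0 with h | h
    · rw [h, zero_mul]
    · have h1 : ∀ i : Fin N, L ≤ (i : ℕ) → s i = x i := by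
        by_contra hc
        exact h (by rw [f_apply, if_neg hc])
      have h2 : f hLN Y x t = 0 := by
        rw [f_apply, if_neg]
        intro hc
        exact hst fun i hi => (h1 i hi).trans (hc i hi)
      rw [h2, mul_zero]

lemma f_jw (hLN : L ≤ N) (j : Fin L) :
    jwOp N (Fin.castLE hLN j) = f hLN (jwOp L j) := by
  ext s t
  rw [f_apply, jwOp, Matrix.of_apply]
  by_cases hc : (∀ i, i ≠ Fin.castLE hLN j → s i = t i) ∧
      s (Fin.castLE hLN j) = 0 ∧ t (Fin.castLE hLN j) = 1
  · rw [if_pos hc]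
    have hT : ∀ i : Fin N, L ≤ (i : ℕ) → s i = t i := by
      intro i hi
      refine hc.1 i (fun he => ?_)
      have : (i : ℕ) = (j : ℕ) := by rw [he]; rfl
      omega
    have hcl : (∀ i : Fin L, i ≠ j →
          (fun k => s (Fin.castLE hLN k)) i = (fun k => t (Fin.castLE hLN k)) i) ∧
        (fun k => s (Fin.castLE hLN k)) j = 0 ∧ (fun k => t (Fin.castLE hLN k)) j = 1 := by
      refine ⟨fun k hk => hc.1 (Fin.castLE hLN k) (fun he => hk ?_), hc.2.1, hc.2.2⟩
      exact Fin.ext (by simpa [Fin.ext_iff] using he)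
    rw [if_pos hT, jwOp, Matrix.of_apply, if_pos hcl]
    show _ = ∏ k ∈ Finset.univ.filter (fun k : Fin L => (k : ℕ) < (j : ℕ)),
      (-1 : ℂ) ^ ((s (Fin.castLE hLN k) : ℕ))
    refine Finset.prod_nbij' (fun i => if h : (i : ℕ) < L then (⟨(i : ℕ), h⟩ : Fin L) else j)
      (fun k => Fin.castLE hLN k) ?_ ?_ ?_ ?_ ?_
    · intro a ha
      simp only [Finset.mem_filter, Finset.mem_univ, true_and] at ha ⊢
      have hj : (a : ℕ) < (j : ℕ) := ha
      have haL : (a : ℕ) < L := lt_of_lt_of_le hj (le_of_lt j.isLt)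
      rw [dif_pos haL]
      exact hj
    · intro k hk
      simp only [Finset.mem_filter, Finset.mem_univ, true_and] at hk ⊢
      exact hk
    · intro a ha
      simp only [Finset.mem_filter, Finset.mem_univ, true_and] at ha
      have hj : (a : ℕ) < (j : ℕ) := ha
      have haL : (a : ℕ) < L := lt_of_lt_of_le hj (le_of_lt j.isLt)
      simp only [dif_pos haL]
      rfl
    · intro k hk
      simp only [Fin.coe_castLE, Fin.is_lt, dif_pos]
    · intro a ha
      simp only [Finset.mem_filter, Finset.mem_univ, true_and] at ha
      have hj : (a : ℕ) < (j : ℕ) := ha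
      have haL : (a : ℕ) < L := lt_of_lt_of_le hj (le_of_lt j.isLt)
      simp only [dif_pos haL]
      rfl
  · rw [if_neg hc]
    by_cases hT : ∀ i : Fin N, L ≤ (i : ℕ) → s i = t i
    · rw [if_pos hT, jwOp, Matrix.of_apply, if_neg]
      intro hcl
      refine hc ⟨fun i hi => ?_, hcl.2.1, hcl.2.2⟩
      by_cases hiL : (i : ℕ) < L
      · have hieq : i = Fin.castLE hLN ⟨(i : ℕ), hiL⟩ := Fin.ext rfl
        rw [hieq]
        refine hcl.1 ⟨(i : ℕ), hiL⟩ (fun he => hi ?_)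
        rw [hieq]
        exact congrArg (Fin.castLE hLN) he
      · exact hT i (Nat.not_lt.mp hiL)
    · rw [if_neg hT]

def sgn {N : ℕ} (j : Fin N) (s : BitStr N) : ℂ :=
  ∏ i ∈ Finset.univ.filter (fun i : Fin N => (i : ℕ) < (j : ℕ)), (-1 : ℂ) ^ (s i : ℕ)

lemma jw_apply {N : ℕ} (j : Fin N) (s t : BitStr N) :
    jwOp N j s t =
      if (∀ i, i ≠ j → s i = t i) ∧ s j = 0 ∧ t j = 1 then sgn j s else 0 := rfl

lemma conj_sgn {N : ℕ} (j : Fin N) (s : BitStr N) :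
    (starRingEnd ℂ) (sgn j s) = sgn j s := by
  rw [sgn, map_prod]
  exact Finset.prod_congr rfl fun i _ => by rw [map_pow, map_neg, _root_.map_one]

lemma sgn_mul_sgn {N : ℕ} (j : Fin N) (s : BitStr N) : sgn j s * sgn j s = 1 := by
  rw [sgn, ← Finset.prod_mul_distrib]
  refine Finset.prod_eq_one fun i _ => ?_
  rw [← mul_pow, neg_mul_neg, one_mul, one_pow]

lemma jw_support {N : ℕ} {j : Fin N} {s t : BitStr N} (h : jwOp N j s t ≠ 0) :
    (∀ i, i ≠ j → s i = t i) ∧ s j = 0 ∧ t j = 1 := by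
  by_contra hc
  rw [jw_apply, if_neg hc] at h
  exact h rfl

lemma site_apply {N : ℕ} (j : Fin N) (A : Matrix (Fin 2) (Fin 2) ℂ) (s t : BitStr N) :
    site j A s t = if ∀ i, i ≠ j → s i = t i then A (s j) (t j) else 0 := rfl

lemma E_apply (a b x y : Fin 2) : E a b x y = if x = a ∧ y = b then 1 else 0 := rfl

lemma jw_mul_star {N : ℕ} (j : Fin N) :
    jwOp N j * star (jwOp N j) = site j (E 0 0) := by
  ext s t
  rw [Matrix.mul_apply, site_apply]
  by_cases hc : (∀ i, i ≠ j → s i = t i) ∧ s j = 0 ∧ t j = 0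
  · have hst : s = t := by
      funext i
      by_cases hij : i = j
      · rw [hij, hc.2.1, hc.2.2]
      · exact hc.1 i hij
    subst hst
    rw [if_pos hc.1, E_apply, if_pos ⟨hc.2.1, hc.2.2⟩]
    rw [Finset.sum_eq_single (Function.update s j 1)]
    · have h1 : jwOp N j s (Function.update s j 1) = sgn j s := by
        rw [jw_apply, if_pos]
        exact ⟨fun i hij => (Function.update_of_ne hij _ s).symm, hc.2.1,
          Function.update_self j 1 s⟩
      rw [Matrix.star_apply, h1, Complex.star_def, conj_sgn, sgn_mul_sgn]
    · intro x _ hx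
      rcases eq_or_ne (jwOp N j s x) 0 with h | h
      · rw [h, zero_mul]
      · exfalso
        obtain ⟨ho, hs0, hx1⟩ := jw_support h
        refine hx (funext fun i => ?_)
        by_cases hij : i = j
        · rw [hij, hx1, Function.update_self]
        · rw [Function.update_of_ne hij, ho i hij]
    · intro h
      exact absurd (Finset.mem_univ _) h
  · have hz : ∀ x : BitStr N, jwOp N j s x * star (jwOp N j) x t = 0 := by
      intro x
      rcases eq_or_ne (jwOp N j s x) 0 with h | h
      · rw [h, zero_mul]
      rcases eq_or_ne (jwOp N j t x) 0 with h2 | h2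
      · rw [Matrix.star_apply, h2, star_zero, mul_zero]
      exfalso
      obtain ⟨ho, hs0, hx1⟩ := jw_support h
      obtain ⟨ho2, ht0, _⟩ := jw_support h2
      exact hc ⟨fun i hij => (ho i hij).trans (ho2 i hij).symm, hs0, ht0⟩
    rw [Finset.sum_eq_zero fun x _ => hz x]
    by_cases hoff : ∀ i, i ≠ j → s i = t i
    · rw [if_pos hoff, E_apply, if_neg]
      intro hET
      exact hc ⟨hoff, hET.1, hET.2⟩
    · rw [if_neg hoff]

lemma star_jw_mul {N : ℕ} (j : Fin N) :
    star (jwOp N j) * jwOp N j = site j (E 1 1) := by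
  ext s t
  rw [Matrix.mul_apply, site_apply]
  by_cases hc : (∀ i, i ≠ j → s i = t i) ∧ s j = 1 ∧ t j = 1
  · have hst : s = t := by
      funext i
      by_cases hij : i = j
      · rw [hij, hc.2.1, hc.2.2]
      · exact hc.1 i hij
    subst hst
    rw [if_pos hc.1, E_apply, if_pos ⟨hc.2.1, hc.2.2⟩]
    rw [Finset.sum_eq_single (Function.update s j 0)]
    · have h1 : jwOp N j (Function.update s j 0) s = sgn j (Function.update s j 0) := by
        rw [jw_apply, if_pos]
        exact ⟨fun i hij => Function.update_of_ne hij _ s, Function.update_self j 0 s, hc.2.1⟩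
      rw [Matrix.star_apply, h1, Complex.star_def, conj_sgn, sgn_mul_sgn]
    · intro x _ hx
      rcases eq_or_ne (jwOp N j x s) 0 with h | h
      · rw [h, mul_zero]
      · exfalso
        obtain ⟨ho, hx0, ht1⟩ := jw_support h
        refine hx (funext fun i => ?_)
        by_cases hij : i = j
        · rw [hij, hx0, Function.update_self]
        · rw [Function.update_of_ne hij, ho i hij]
    · intro h
      exact absurd (Finset.mem_univ _) h
  · have hz : ∀ x : BitStr N, star (jwOp N j) s x * jwOp N j x t = 0 := by
      intro x
      rcases eq_or_ne (jwOp N j x t) 0 with h | h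
      · rw [h, mul_zero]
      rcases eq_or_ne (jwOp N j x s) 0 with h2 | h2
      · rw [Matrix.star_apply, h2, star_zero, zero_mul]
      exfalso
      obtain ⟨ho, hx0, ht1⟩ := jw_support h
      obtain ⟨ho2, _, hs1⟩ := jw_support h2
      exact hc ⟨fun i hij => (ho2 i hij).symm.trans (ho i hij), hs1, ht1⟩
    rw [Finset.sum_eq_zero fun x _ => hz x]
    by_cases hoff : ∀ i, i ≠ j → s i = t i
    · rw [if_pos hoff, E_apply, if_neg]
      intro hET
      exact hc ⟨hoff, hET.1, hET.2⟩
    · rw [if_neg hoff]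

lemma fin2 (a : Fin 2) : a = 0 ∨ a = 1 := by omega

lemma siteZ_diag {N : ℕ} (j : Fin N) :
    site j (E 0 0) - site j (E 1 1) =
      Matrix.diagonal (fun s : BitStr N => (-1 : ℂ) ^ (s j : ℕ)) := by
  ext s t
  rw [Matrix.sub_apply, site_apply, site_apply, Matrix.diagonal_apply]
  by_cases hst : s = t
  · subst hst
    rw [if_pos rfl, if_pos (fun i _ => rfl), if_pos (fun i _ => rfl), E_apply, E_apply]
    rcases fin2 (s j) with h | h <;> rw [h] <;> norm_num
  · rw [if_neg hst]
    by_cases hoff : ∀ i, i ≠ j → s i = t i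
    · have hj : s j ≠ t j := by
        intro h
        refine hst (funext fun i => ?_)
        by_cases hij : i = j
        · rw [hij]; exact h
        · exact hoff i hij
      rw [if_pos hoff, if_pos hoff, E_apply, E_apply,
        if_neg (fun h => hj (h.1.trans h.2.symm)), if_neg (fun h => hj (h.1.trans h.2.symm)),
        sub_zero]
    · rw [if_neg hoff, if_neg hoff, sub_zero]

def Zop' (N k : ℕ) : Matrix (BitStr N) (BitStr N) ℂ :=
  if h : k < N then site ⟨k, h⟩ (E 0 0) - site ⟨k, h⟩ (E 1 1) else 1

def zprod (N : ℕ) : ℕ → Matrix (BitStr N) (BitStr N) ℂ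
  | 0 => 1
  | k + 1 => zprod N k * Zop' N k

lemma zprod_eq {N : ℕ} (k : ℕ) (hk : k ≤ N) :
    zprod N k = Matrix.diagonal (fun s : BitStr N =>
      ∏ i ∈ Finset.univ.filter (fun i : Fin N => (i : ℕ) < k), (-1 : ℂ) ^ (s i : ℕ)) := by
  induction k with
  | zero =>
    have : (Finset.univ.filter (fun i : Fin N => (i : ℕ) < 0)) = ∅ := by
      ext i; simp
    rw [zprod, this]
    simp [Matrix.diagonal_one]
  | succ k ih =>
    have hkN : k < N := hk
    have hfil : (Finset.univ.filter (fun i : Fin N => (i : ℕ) < k + 1)) =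
        insert (⟨k, hkN⟩ : Fin N) (Finset.univ.filter (fun i : Fin N => (i : ℕ) < k)) := by
      ext i
      simp only [Finset.mem_filter, Finset.mem_univ, true_and, Finset.mem_insert, Fin.ext_iff]
      omega
    have hnotmem : (⟨k, hkN⟩ : Fin N) ∉
        (Finset.univ.filter (fun i : Fin N => (i : ℕ) < k)) := by
      simp
    rw [zprod, ih (le_of_lt hkN), Zop', dif_pos hkN, siteZ_diag,
      Matrix.diagonal_mul_diagonal]
    simp only [hfil]
    refine congrArg Matrix.diagonal (funext fun s => ?_)
    rw [Finset.prod_insert hnotmem, mul_comm]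

lemma zprod_mul_jw {N : ℕ} (j : Fin N) :
    zprod N (j : ℕ) * jwOp N j = site j (E 0 1) := by
  rw [zprod_eq (j : ℕ) (le_of_lt j.isLt)]
  ext s t
  rw [Matrix.diagonal_mul, jw_apply, site_apply, mul_ite, mul_zero]
  by_cases hc : (∀ i, i ≠ j → s i = t i) ∧ s j = 0 ∧ t j = 1
  · rw [if_pos hc, if_pos hc.1, E_apply, if_pos ⟨hc.2.1, hc.2.2⟩]
    exact sgn_mul_sgn j s
  · rw [if_neg hc]
    by_cases hoff : ∀ i, i ≠ j → s i = t i
    · rw [if_pos hoff, E_apply, if_neg (fun h => hc ⟨hoff, h.1, h.2⟩)]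
    · rw [if_neg hoff]

lemma star_site {N : ℕ} (j : Fin N) (A : Matrix (Fin 2) (Fin 2) ℂ) :
    star (site j A) = site j Aᴴ := by
  ext s t
  rw [Matrix.star_apply, site_apply, site_apply, apply_ite (star : ℂ → ℂ), star_zero]
  by_cases h : ∀ i, i ≠ j → s i = t i
  · rw [if_pos h, if_pos (fun i hi => (h i hi).symm)]
    rfl
  · rw [if_neg h, if_neg (fun h' => h (fun i hi => (h' i hi).symm))]

lemma E_conjTranspose (a b : Fin 2) : (E a b)ᴴ = E b a := by
  ext x y
  rw [Matrix.conjTranspose_apply, E_apply, E_apply, apply_ite (star : ℂ → ℂ), star_zero,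
    star_one]
  by_cases h : x = b ∧ y = a
  · rw [if_pos h, if_pos ⟨h.2, h.1⟩]
  · rw [if_neg h, if_neg (fun h' => h ⟨h'.2, h'.1⟩)]

lemma jw_mem (hLN : L ≤ N) (j : Fin N) (hj : (j : ℕ) < L) :
    jwOp N j ∈ NonUnitalStarAlgebra.adjoin ℂ
      (Set.range fun j : Fin L => jwOp N (Fin.castLE hLN j)) := by
  exact NonUnitalStarAlgebra.subset_adjoin ℂ _ ⟨⟨(j : ℕ), hj⟩, by congr 1⟩

lemma Zop'_mem (hLN : L ≤ N) (k : ℕ) (hk : k < L) :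
    Zop' N k ∈ NonUnitalStarAlgebra.adjoin ℂ
      (Set.range fun j : Fin L => jwOp N (Fin.castLE hLN j)) := by
  have hkN : k < N := lt_of_lt_of_le hk hLN
  rw [Zop', dif_pos hkN, ← jw_mul_star, ← star_jw_mul]
  have hjw := jw_mem hLN ⟨k, hkN⟩ hk
  exact sub_mem (mul_mem hjw (star_mem hjw)) (mul_mem (star_mem hjw) hjw)

lemma zmul_mem (hLN : L ≤ N) (k : ℕ) (hk : k ≤ L)
    (X : Matrix (BitStr N) (BitStr N) ℂ)
    (hX : X ∈ NonUnitalStarAlgebra.adjoin ℂ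
      (Set.range fun j : Fin L => jwOp N (Fin.castLE hLN j))) :
    zprod N k * X ∈ NonUnitalStarAlgebra.adjoin ℂ
      (Set.range fun j : Fin L => jwOp N (Fin.castLE hLN j)) := by
  induction k generalizing X with
  | zero => rw [zprod, one_mul]; exact hX
  | succ k ih =>
    rw [zprod, mul_assoc]
    exact ih (le_of_lt hk) _ (mul_mem (Zop'_mem hLN k hk) hX)

lemma site_mem (hLN : L ≤ N) (j : Fin N) (hj : (j : ℕ) < L) (a b : Fin 2) :
    site j (E a b) ∈ NonUnitalStarAlgebra.adjoin ℂ
      (Set.range fun j : Fin L => jwOp N (Fin.castLE hLN j)) := by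
  have hjw := jw_mem hLN j hj
  have h01 : site j (E 0 1) ∈ NonUnitalStarAlgebra.adjoin ℂ
      (Set.range fun j : Fin L => jwOp N (Fin.castLE hLN j)) := by
    rw [← zprod_mul_jw]
    exact zmul_mem hLN (j : ℕ) (le_of_lt hj) _ hjw
  rcases fin2 a with ha | ha <;> rcases fin2 b with hb | hb <;> subst ha <;> subst hb
  · rw [← jw_mul_star]
    exact mul_mem hjw (star_mem hjw)
  · exact h01
  · have : site j (E 1 0) = star (site j (E 0 1)) := by
      rw [star_site, E_conjTranspose]
    rw [this]
    exact star_mem h01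
  · rw [← star_jw_mul]
    exact mul_mem (star_mem hjw) hjw

lemma site_E_support {N : ℕ} {j : Fin N} {a b : Fin 2} {s t : BitStr N}
    (h : site j (E a b) s t ≠ 0) :
    (∀ i, i ≠ j → s i = t i) ∧ s j = a ∧ t j = b := by
  by_cases hoff : ∀ i, i ≠ j → s i = t i
  · by_cases hE : s j = a ∧ t j = b
    · exact ⟨hoff, hE⟩
    · exact absurd (by rw [site_apply, if_pos hoff, E_apply, if_neg hE]) h
  · exact absurd (by rw [site_apply, if_neg hoff]) h

def Eunit {L : ℕ} (u v : BitStr L) : Matrix (BitStr L) (BitStr L) ℂ :=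
  Matrix.of fun w x => if w = u ∧ x = v then 1 else 0

def pemb (hLN : L ≤ N) (u v : BitStr L) (m : ℕ) : Matrix (BitStr N) (BitStr N) ℂ :=
  Matrix.of fun s t =>
    if (∀ k : Fin L, (k : ℕ) < m →
          s (Fin.castLE hLN k) = u k ∧ t (Fin.castLE hLN k) = v k) ∧
        (∀ i : Fin N, m ≤ (i : ℕ) → s i = t i) then 1 else 0

lemma pemb_apply (hLN : L ≤ N) (u v : BitStr L) (m : ℕ) (s t : BitStr N) :
    pemb hLN u v m s t =
      if (∀ k : Fin L, (k : ℕ) < m →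
            s (Fin.castLE hLN k) = u k ∧ t (Fin.castLE hLN k) = v k) ∧
          (∀ i : Fin N, m ≤ (i : ℕ) → s i = t i) then 1 else 0 := rfl

lemma pemb_support {hLN : L ≤ N} {u v : BitStr L} {m : ℕ} {s t : BitStr N}
    (h : pemb hLN u v m s t ≠ 0) :
    (∀ k : Fin L, (k : ℕ) < m →
        s (Fin.castLE hLN k) = u k ∧ t (Fin.castLE hLN k) = v k) ∧
      (∀ i : Fin N, m ≤ (i : ℕ) → s i = t i) := by
  by_contra hc
  exact h (by rw [pemb_apply, if_neg hc])

lemma pemb_zero (hLN : L ≤ N) (u v : BitStr L) : pemb hLN u v 0 = 1 := by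
  ext s t
  rw [pemb_apply, Matrix.one_apply]
  by_cases h : s = t
  · subst h
    rw [if_pos rfl, if_pos ⟨fun k hk => absurd hk (Nat.not_lt_zero _), fun i _ => rfl⟩]
  · rw [if_neg h, if_neg (fun hc => h (funext fun i => hc.2 i (Nat.zero_le _)))]

lemma pemb_succ (hLN : L ≤ N) (u v : BitStr L) (m : ℕ) (hm : m < L) :
    pemb hLN u v (m + 1) =
      pemb hLN u v m *
        site (Fin.castLE hLN ⟨m, hm⟩) (E (u ⟨m, hm⟩) (v ⟨m, hm⟩)) := by
  ext s t
  have hjmv : ((Fin.castLE hLN ⟨m, hm⟩ : Fin N) : ℕ) = m := rfl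
  set jm : Fin N := Fin.castLE hLN ⟨m, hm⟩ with hjm
  rw [Matrix.mul_apply, pemb_apply]
  by_cases hC : (∀ k : Fin L, (k : ℕ) < m + 1 →
        s (Fin.castLE hLN k) = u k ∧ t (Fin.castLE hLN k) = v k) ∧
      (∀ i : Fin N, m + 1 ≤ (i : ℕ) → s i = t i)
  · rw [if_pos hC]
    have hsm : s jm = u ⟨m, hm⟩ := (hC.1 ⟨m, hm⟩ (Nat.lt_succ_self m)).1
    have htm : t jm = v ⟨m, hm⟩ := (hC.1 ⟨m, hm⟩ (Nat.lt_succ_self m)).2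
    rw [Finset.sum_eq_single (Function.update t jm (u ⟨m, hm⟩))]
    · have h2 : site jm (E (u ⟨m, hm⟩) (v ⟨m, hm⟩)) (Function.update t jm (u ⟨m, hm⟩)) t
          = 1 := by
        rw [site_apply, if_pos (fun i hi => Function.update_of_ne hi _ t), E_apply,
          Function.update_self, if_pos ⟨rfl, htm⟩]
      have h1 : pemb hLN u v m s (Function.update t jm (u ⟨m, hm⟩)) = 1 := by
        rw [pemb_apply, if_pos]
        constructor
        · intro k hk
          have hne : Fin.castLE hLN k ≠ jm := by
            intro he
            have : (k : ℕ) = m := by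
              have := congrArg (fun z : Fin N => (z : ℕ)) he
              simpa [hjmv] using this
            omega
          rw [Function.update_of_ne hne]
          exact ⟨(hC.1 k (Nat.lt_succ_of_lt hk)).1, (hC.1 k (Nat.lt_succ_of_lt hk)).2⟩
        · intro i hi
          by_cases hij : i = jm
          · rw [hij, Function.update_self, hsm]
          · have him : m + 1 ≤ (i : ℕ) := by
              rcases Nat.lt_or_ge (i : ℕ) (m + 1) with h | h
              · exfalso
                have : (i : ℕ) = m := by omega
                exact hij (Fin.ext (this.trans hjmv.symm))
              · exact h
            rw [Function.update_of_ne hij]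
            exact hC.2 i him
      rw [h1, h2, one_mul]
    · intro x _ hx
      rcases eq_or_ne (site jm (E (u ⟨m, hm⟩) (v ⟨m, hm⟩)) x t) 0 with h | h
      · rw [h, mul_zero]
      · exfalso
        obtain ⟨hoff, hxa, htb⟩ := site_E_support h
        refine hx (funext fun i => ?_)
        by_cases hij : i = jm
        · rw [hij, Function.update_self, hxa]
        · rw [Function.update_of_ne hij, hoff i hij]
    · intro h
      exact absurd (Finset.mem_univ _) h
  · rw [if_neg hC]
    refine (Finset.sum_eq_zero fun x _ => ?_).symm
    rcases eq_or_ne (pemb hLN u v m s x) 0 with h1 | h1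
    · rw [h1, zero_mul]
    rcases eq_or_ne (site jm (E (u ⟨m, hm⟩) (v ⟨m, hm⟩)) x t) 0 with h2 | h2
    · rw [h2, mul_zero]
    exfalso
    obtain ⟨hhead, htail⟩ := pemb_support h1
    obtain ⟨hoff, hxa, htb⟩ := site_E_support h2
    refine hC ⟨fun k hk => ?_, fun i hi => ?_⟩
    · rcases Nat.lt_or_ge (k : ℕ) m with hkm | hkm
      · have hne : Fin.castLE hLN k ≠ jm := by
          intro he
          have : (k : ℕ) = m := by
            have := congrArg (fun z : Fin N => (z : ℕ)) he
            simpa [hjmv] using this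
          omega
        exact ⟨(hhead k hkm).1, (hoff _ hne).symm.trans (hhead k hkm).2⟩
      · have hkk : k = ⟨m, hm⟩ := Fin.ext (show (k : ℕ) = m by omega)
        subst hkk
        have hs : s jm = x jm := htail jm (le_of_eq hjmv.symm)
        exact ⟨hs.trans hxa, htb⟩
    · have hne : i ≠ jm := by
        intro he
        have : (i : ℕ) = m := by rw [he, hjmv]
        omega
      exact (htail i (by omega)).trans (hoff i hne)

lemma pemb_mem (hLN : L ≤ N) (u v : BitStr L) (m : ℕ) (h1 : 1 ≤ m) (hm : m ≤ L) :
    pemb hLN u v m ∈ NonUnitalStarAlgebra.adjoin ℂ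
      (Set.range fun j : Fin L => jwOp N (Fin.castLE hLN j)) := by
  induction m with
  | zero => omega
  | succ m ih =>
    have hmL : m < L := hm
    rw [pemb_succ hLN u v m hmL]
    rcases Nat.eq_zero_or_pos m with h0 | h0
    · subst h0
      rw [pemb_zero, one_mul]
      exact site_mem hLN _ hmL _ _
    · exact mul_mem (ih h0 (le_of_lt hmL)) (site_mem hLN _ hmL _ _)

lemma pemb_L (hLN : L ≤ N) (u v : BitStr L) :
    pemb hLN u v L = f hLN (Eunit u v) := by
  ext s t
  rw [pemb_apply, f_apply]
  by_cases hT : ∀ i : Fin N, L ≤ (i : ℕ) → s i = t i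
  · simp only [Eunit, Matrix.of_apply]
    rw [if_pos hT]
    by_cases hH : (fun k => s (Fin.castLE hLN k)) = u ∧ (fun k => t (Fin.castLE hLN k)) = v
    · rw [if_pos hH,
        if_pos ⟨fun k _ => ⟨congrFun hH.1 k, congrFun hH.2 k⟩, hT⟩]
    · rw [if_neg hH, if_neg]
      intro hc
      exact hH ⟨funext fun k => (hc.1 k k.isLt).1, funext fun k => (hc.1 k k.isLt).2⟩
  · rw [if_neg hT, if_neg (fun hc => hT hc.2)]

lemma f_zero (hLN : L ≤ N) : f hLN (0 : Matrix (BitStr L) (BitStr L) ℂ) = 0 := by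
  ext s t
  rw [f_apply]
  simp

lemma f_sum (hLN : L ≤ N) {ι : Type*} (s : Finset ι)
    (g : ι → Matrix (BitStr L) (BitStr L) ℂ) :
    f hLN (∑ i ∈ s, g i) = ∑ i ∈ s, f hLN (g i) := by
  classical
  induction s using Finset.induction_on with
  | empty => simp [f_zero]
  | insert _ _ hnot ih =>
    rw [Finset.sum_insert hnot, Finset.sum_insert hnot, f_add, ih]

lemma X_expand {L : ℕ} (X : Matrix (BitStr L) (BitStr L) ℂ) :
    X = ∑ u : BitStr L, ∑ v : BitStr L, X u v • Eunit u v := by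
  ext w x
  symm
  simp only [Matrix.sum_apply, Matrix.smul_apply, Eunit, Matrix.of_apply, smul_eq_mul,
    mul_ite, mul_one, mul_zero, ite_and]
  simp [Finset.sum_ite_eq, Finset.sum_ite_eq']

end JWP


/-- The smallest linear subspace of `M_{2^N}(ℂ)` containing the Jordan–Wigner operators
`a₁, …, a_L` and closed under matrix multiplication and conjugate transpose (i.e. the
non-unital star subalgebra they generate) is exactly `{X ⊗ I_{2^{N−L}}}`: the set of matrices
acting nontrivially only on the first `L` modes. -/
theorem jordan_wigner_locality (L N : ℕ) (hL : 1 ≤ L) (hLN : L ≤ N) :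
    (NonUnitalStarAlgebra.adjoin ℂ
        (Set.range fun j : Fin L => jwOp N (Fin.castLE hLN j)) :
        Set (Matrix (BitStr N) (BitStr N) ℂ))
      = {Y | ∃ X : Matrix (BitStr L) (BitStr L) ℂ, ∀ s t : BitStr N,
          Y s t =
            if ∀ i : Fin N, L ≤ (i : ℕ) → s i = t i then
              X (fun k => s (Fin.castLE hLN k)) (fun k => t (Fin.castLE hLN k))
            else 0} := by
  ext Y
  simp only [SetLike.mem_coe, Set.mem_setOf_eq]
  constructor
  · intro hY
    have key : ∃ X, Y = JWP.f hLN X := by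
      induction hY using NonUnitalStarAlgebra.adjoin_induction with
      | mem x hx =>
        obtain ⟨j, rfl⟩ := hx
        exact ⟨jwOp L j, JWP.f_jw hLN j⟩
      | add x y _ _ hx hy =>
        obtain ⟨X1, rfl⟩ := hx
        obtain ⟨X2, rfl⟩ := hy
        exact ⟨X1 + X2, (JWP.f_add hLN X1 X2).symm⟩
      | zero => exact ⟨0, (JWP.f_zero hLN).symm⟩
      | mul x y _ _ hx hy =>
        obtain ⟨X1, rfl⟩ := hx
        obtain ⟨X2, rfl⟩ := hy
        exact ⟨X1 * X2, JWP.f_mul hLN X1 X2⟩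
      | smul c x _ hx =>
        obtain ⟨X1, rfl⟩ := hx
        exact ⟨c • X1, (JWP.f_smul hLN c X1).symm⟩
      | star x _ hx =>
        obtain ⟨X1, rfl⟩ := hx
        exact ⟨star X1, JWP.f_star hLN X1⟩
    obtain ⟨X, rfl⟩ := key
    exact ⟨X, fun s t => rfl⟩
  · rintro ⟨X, hX⟩
    have hYf : Y = JWP.f hLN X := by
      ext s t
      rw [hX s t, JWP.f_apply]
    rw [hYf]
    have expand : JWP.f hLN X
        = ∑ u : BitStr L, ∑ v : BitStr L, X u v • JWP.f hLN (JWP.Eunit u v) := by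
      conv_lhs => rw [JWP.X_expand X]
      rw [JWP.f_sum]
      refine Finset.sum_congr rfl fun u _ => ?_
      rw [JWP.f_sum]
      exact Finset.sum_congr rfl fun v _ => JWP.f_smul hLN _ _
    rw [expand]
    refine sum_mem fun u _ => sum_mem fun v _ => SMulMemClass.smul_mem _ ?_
    rw [← JWP.pemb_L hLN u v]
    exact JWP.pemb_mem hLN u v L hL le_rfl
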